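/- arXiv:math/0304403 — 2 statements merged into one kernel-verified Lean document; each statement's English description precedes it below -/
import Mathlib

section
/- Fix integers 1 ≤ r ≤ n. Let R be a commutative ring and c ∈ R. Let α₁ > α₂ > ⋯ > α_r ≥ 0 be integers, let 1 ≤ j ≤ r be an index with α_j ≥ n, and assume that α_j − n is not equal to any α_i, 1 ≤ i ≤ r. Let k be the largest index with α_k > α_j − n (so k ≥ j), and let α' be the strictly decreasing sequence (α₁, …, α_{j−1}, α_{j+1}, …, α_k, α_j − n, α_{k+1}, …, α_r). Then D_α − (−1)^{k−j}·c·D_{α'} lies in the ideal I_P(c) of R[x₁,…,x_r] generated by x₁^n − c, …, x_r^n − c. -/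
open Finset MvPolynomial

/-- The complete homogeneous symmetric polynomial of degree `k` in the variables
`x₁, …, x_r`: the sum of all monomials of total degree `k`. -/
noncomputable def hsymm (R : Type*) [CommRing R] (r k : ℕ) : MvPolynomial (Fin r) R :=
  ∑ d ∈ (Fintype.piFinset fun _ : Fin r => Finset.range (k + 1)).filter
      (fun d => ∑ i, d i = k),
    ∏ i, X i ^ d i

/-- The Vandermonde determinant `Δ = ∏_{1 ≤ i < j ≤ r} (xᵢ - xⱼ)`. -/
noncomputable def vander (R : Type*) [CommRing R] (r : ℕ) : MvPolynomial (Fin r) R :=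
  ∏ p ∈ Finset.univ.filter (fun p : Fin r × Fin r => p.1 < p.2), (X p.1 - X p.2)

/-- The ideal `I_P(c) = ⟨x₁ⁿ - c, …, x_rⁿ - c⟩` of `R[x₁,…,x_r]`. -/
noncomputable def IP (R : Type*) [CommRing R] (r n : ℕ) (c : R) :
    Ideal (MvPolynomial (Fin r) R) :=
  Ideal.span (Set.range fun i : Fin r => X i ^ n - C c)

/-- `Dalpha R r α = det (xᵢ^{αⱼ})_{1 ≤ i,j ≤ r}`. -/
noncomputable def Dalpha (R : Type*) [CommRing R] (r : ℕ) (α : Fin r → ℕ) :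
    MvPolynomial (Fin r) R :=
  Matrix.det (Matrix.of fun i j : Fin r => X i ^ α j)

private lemma det_mem_of_col {S : Type*} [CommRing S] (I : Ideal S) {m : ℕ}
    (M : Matrix (Fin m) (Fin m) S) (j : Fin m) (h : ∀ i, M i j ∈ I) : M.det ∈ I := by
  rw [Matrix.det_apply']
  refine Ideal.sum_mem _ fun σ _ => ?_
  rw [← Finset.mul_prod_erase Finset.univ _ (Finset.mem_univ j)]
  exact Ideal.mul_mem_left _ _ (Ideal.mul_mem_right _ _ (h (σ j)))


/-- Step 1: replacing `α j` by `α j - n` costs a factor `c` modulo the ideal. -/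
private lemma step1 (n r : ℕ) (R : Type*) [CommRing R] (c : R)
    (α : Fin r → ℕ) (j : Fin r) (hjn : n ≤ α j) :
    Dalpha R r α - C c * Dalpha R r (Function.update α j (α j - n)) ∈ IP R r n c := by
  classical
  set M : Matrix (Fin r) (Fin r) (MvPolynomial (Fin r) R) :=
    Matrix.of fun i j' : Fin r => X i ^ α j' with hMdef
  have hMβ : Dalpha R r (Function.update α j (α j - n))
      = (M.updateCol j fun i => X i ^ (α j - n)).det := by
    unfold Dalpha
    congr 1
    ext i j'
    simp only [Matrix.of_apply, Matrix.updateCol_apply, Function.update_apply, hMdef]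
    split <;> simp_all
  have hM : Dalpha R r α
      = (M.updateCol j fun i =>
          X i ^ (α j - n) * (X i ^ n - C c) + C c * X i ^ (α j - n)).det := by
    unfold Dalpha
    have hcol : (fun i : Fin r => X i ^ (α j - n) * ((X i : MvPolynomial (Fin r) R) ^ n - C c)
        + C c * X i ^ (α j - n)) = fun i => M i j := by
      funext i
      have h1 : (X i : MvPolynomial (Fin r) R) ^ (α j - n) * X i ^ n = X i ^ α j := by
        rw [← pow_add, Nat.sub_add_cancel hjn]
      simp only [hMdef, Matrix.of_apply]
      linear_combination h1
    rw [hcol, Matrix.updateCol_eq_self]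
  have hadd : (M.updateCol j fun i =>
        X i ^ (α j - n) * ((X i : MvPolynomial (Fin r) R) ^ n - C c)
          + C c * X i ^ (α j - n)).det
      = (M.updateCol j fun i =>
          X i ^ (α j - n) * ((X i : MvPolynomial (Fin r) R) ^ n - C c)).det
        + (M.updateCol j fun i => C c * X i ^ (α j - n)).det :=
    Matrix.det_updateCol_add M j _ _
  have hsmul : (M.updateCol j fun i => C c * X i ^ (α j - n)).det
      = C c * (M.updateCol j fun i => X i ^ (α j - n)).det := by
    have := Matrix.det_updateCol_smul M j (C c : MvPolynomial (Fin r) R)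
      (fun i => X i ^ (α j - n))
    simpa [Pi.smul_def, smul_eq_mul] using this
  have key : Dalpha R r α - C c * Dalpha R r (Function.update α j (α j - n))
      = (M.updateCol j fun i =>
          X i ^ (α j - n) * ((X i : MvPolynomial (Fin r) R) ^ n - C c)).det := by
    rw [hM, hMβ, hadd, hsmul]; ring
  rw [key]
  refine det_mem_of_col _ _ j fun i => ?_
  rw [Matrix.updateCol_apply, if_pos rfl]
  exact Ideal.mul_mem_left _ _ (Ideal.subset_span ⟨i, rfl⟩)

set_option maxHeartbeats 1600000 in

set_option maxHeartbeats 1600000 in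
/-- The rim-hook reduction in determinantal form (first proof of Theorem 2.5):
for a strictly decreasing sequence `α₁ > ⋯ > α_r ≥ 0`, an index `j` with `αⱼ ≥ n` such
that `αⱼ - n` is not among the `αᵢ`, and `k` the largest index with `α_k > αⱼ - n`
(so `k ≥ j`), letting `α' = (α₁, …, α_{j-1}, α_{j+1}, …, α_k, αⱼ - n, α_{k+1}, …, α_r)`,
we have `D_α - (-1)^{k-j} c D_{α'} ∈ I_P(c) = ⟨x₁ⁿ - c, …, x_rⁿ - c⟩`. -/
theorem rim_hook_reduction (n r : ℕ) (hr : 1 ≤ r) (hrn : r ≤ n)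
    (R : Type*) [CommRing R] (c : R)
    (α : Fin r → ℕ) (hα : StrictAnti α)
    (j k : Fin r) (hjn : n ≤ α j)
    (hnot : ∀ i : Fin r, α i ≠ α j - n)
    (hk1 : α j - n < α k)
    (hk2 : ∀ i : Fin r, α j - n < α i → i ≤ k)
    (hjk : j ≤ k) :
    Dalpha R r α - (-1) ^ ((k : ℕ) - (j : ℕ)) * C c * Dalpha R r
        (fun i => if i < j then α i
          else if h : i < k then
            α ⟨(i : ℕ) + 1, by have := k.isLt; have := Fin.lt_iff_val_lt_val.mp h; omega⟩
          else if i = k then α j - n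
          else α i)
      ∈ IP R r n c := by
  classical
  obtain ⟨r', rfl⟩ : ∃ r', r = r' + 1 := ⟨r - 1, by omega⟩
  set β : Fin (r' + 1) → ℕ := Function.update α j (α j - n) with hβ
  set m : Fin (r' + 1) := ⟨(k : ℕ) - (j : ℕ), by have := k.isLt; omega⟩ with hm
  set σ : Equiv.Perm (Fin (r' + 1)) :=
    (Equiv.addLeft j) * Fin.cycleRange m * (Equiv.addLeft j)⁻¹ with hσ
  have hjk' : (j : ℕ) ≤ (k : ℕ) := hjk
  have hkr : (k : ℕ) < r' + 1 := k.isLt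
  have hjr : (j : ℕ) < r' + 1 := j.isLt
  have hσval : ∀ x : Fin (r' + 1), σ x = j + (Fin.cycleRange m (-j + x)) := fun x => rfl
  have hδinv : ∀ x : Fin (r' + 1),
      ((-j + x : Fin (r' + 1)) : ℕ) = ((x : ℕ) + (r' + 1) - j) % (r' + 1) := by
    intro x
    rw [Fin.val_add, Fin.coe_neg, Nat.mod_add_mod]
    congr 1
    omega
  -- pointwise identity α' = β ∘ σ
  have hpt : ∀ x : Fin (r' + 1),
      (if x < j then α x
        else if h : x < k then
          α ⟨(x : ℕ) + 1, by have := k.isLt; have := Fin.lt_iff_val_lt_val.mp h; omega⟩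
        else if x = k then α j - n
        else α x) = β (σ x) := by
    intro x
    by_cases hxj : x < j
    · -- x < j : σ x = x
      have hxj' : (x : ℕ) < (j : ℕ) := hxj
      have ht : ((-j + x : Fin (r' + 1)) : ℕ) = (x : ℕ) + (r' + 1) - j := by
        rw [hδinv x, Nat.mod_eq_of_lt (by omega)]
      have hgt : m < -j + x := by
        rw [Fin.lt_iff_val_lt_val, ht]; simp only [hm]; omega
      have hσx : σ x = x := by
        rw [hσval, Fin.cycleRange_of_gt hgt]
        apply Fin.ext
        rw [Fin.val_add, ht]
        have h2 : (j : ℕ) + ((x : ℕ) + (r' + 1) - j) = (x : ℕ) + (r' + 1) := by omega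
        rw [h2, Nat.add_mod_right, Nat.mod_eq_of_lt x.isLt]
      rw [hσx, if_pos hxj, hβ, Function.update_apply, if_neg (Fin.ne_of_lt hxj)]
    · -- j ≤ x
      have hxj' : (j : ℕ) ≤ (x : ℕ) := Fin.le_iff_val_le_val.mp (not_lt.mp hxj)
      have ht : ((-j + x : Fin (r' + 1)) : ℕ) = (x : ℕ) - j := by
        rw [hδinv x]
        have h2 : (x : ℕ) + (r' + 1) - j = ((x : ℕ) - j) + (r' + 1) := by omega
        rw [h2, Nat.add_mod_right, Nat.mod_eq_of_lt (by omega)]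
      rcases lt_trichotomy x k with hxk | hxk | hxk
      · -- j ≤ x < k : σ x = x + 1
        have hxk' : (x : ℕ) < (k : ℕ) := hxk
        have hlt : -j + x < m := by
          rw [Fin.lt_iff_val_lt_val, ht]; simp only [hm]; omega
        have hσx : σ x = ⟨(x : ℕ) + 1, by omega⟩ := by
          rw [hσval, Fin.cycleRange_of_lt hlt]
          apply Fin.ext
          rw [Fin.val_add, Fin.val_add, ht]
          have h1 : ((1 : Fin (r' + 1)) : ℕ) = 1 % (r' + 1) := rfl
          have e1 : (1 : ℕ) % (r' + 1) = 1 := Nat.mod_eq_of_lt (by omega)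
          have e2 : ((x : ℕ) - j + 1) % (r' + 1) = (x : ℕ) - j + 1 :=
            Nat.mod_eq_of_lt (by omega)
          have e3 : ((j : ℕ) + ((x : ℕ) - j + 1)) % (r' + 1)
              = (j : ℕ) + ((x : ℕ) - j + 1) := Nat.mod_eq_of_lt (by omega)
          rw [h1, e1, e2, e3]
          show (j : ℕ) + ((x : ℕ) - j + 1) = (x : ℕ) + 1
          omega
        rw [hσx, if_neg hxj, dif_pos hxk, hβ, Function.update_apply,
          if_neg (by simp only [Fin.ext_iff]; omega)]
      · -- x = k : σ x = j
        have htm : (-j + x : Fin (r' + 1)) = m := by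
          apply Fin.ext; rw [ht, hxk]
        have hσx : σ x = j := by
          rw [hσval, htm, Fin.cycleRange_of_eq rfl]
          apply Fin.ext
          rw [Fin.val_add, Fin.val_zero, Nat.add_zero, Nat.mod_eq_of_lt hjr]
        rw [hσx, if_neg hxj, dif_neg (by rw [hxk]; exact lt_irrefl k), if_pos hxk, hβ,
          Function.update_self]
      · -- k < x : σ x = x
        have hxk' : (k : ℕ) < (x : ℕ) := hxk
        have hgt : m < -j + x := by
          rw [Fin.lt_iff_val_lt_val, ht]; simp only [hm]; omega
        have hσx : σ x = x := by
          rw [hσval, Fin.cycleRange_of_gt hgt]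
          apply Fin.ext
          rw [Fin.val_add, ht]
          rw [Nat.mod_eq_of_lt (by omega)]
          omega
        rw [hσx, if_neg hxj, dif_neg (by exact fun h => absurd h (not_lt.mpr hxk.le)),
          if_neg (Fin.ne_of_gt hxk), hβ, Function.update_apply,
          if_neg (by simp only [Fin.ext_iff]; omega)]
  -- sign of σ
  have hsign : Equiv.Perm.sign σ = (-1 : ℤˣ) ^ ((k : ℕ) - (j : ℕ)) := by
    have hcan : ∀ a s : ℤˣ, a * s * a⁻¹ = s := fun a s => by
      rw [mul_comm a s, mul_inv_cancel_right]
    rw [hσ, map_mul, map_mul, map_inv, hcan, Fin.sign_cycleRange]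
  have hB : Dalpha R (r' + 1)
      (fun i => if i < j then α i
        else if h : i < k then
          α ⟨(i : ℕ) + 1, by have := k.isLt; have := Fin.lt_iff_val_lt_val.mp h; omega⟩
        else if i = k then α j - n
        else α i)
      = (-1 : MvPolynomial (Fin (r' + 1)) R) ^ ((k : ℕ) - (j : ℕ))
        * Dalpha R (r' + 1) β := by
    have hmat : (Matrix.of fun i j' : Fin (r' + 1) =>
        (X i : MvPolynomial (Fin (r' + 1)) R) ^
          (if j' < j then α j'
            else if h : j' < k then
              α ⟨(j' : ℕ) + 1, by have := k.isLt; have := Fin.lt_iff_val_lt_val.mp h; omega⟩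
            else if j' = k then α j - n
            else α j'))
        = (Matrix.of fun i j' : Fin (r' + 1) =>
            (X i : MvPolynomial (Fin (r' + 1)) R) ^ β j').submatrix id σ := by
      ext i j'
      simp only [Matrix.of_apply, Matrix.submatrix_apply, id_eq]
      rw [hpt j']
    unfold Dalpha
    rw [hmat, Matrix.det_permute', hsign]
    push_cast
    ring
  rw [hB]
  have hone : ((-1 : MvPolynomial (Fin (r' + 1)) R)) ^ ((k : ℕ) - (j : ℕ))
      * (-1) ^ ((k : ℕ) - (j : ℕ)) = 1 := by
    rw [← pow_add, ← two_mul, pow_mul]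
    norm_num
  have hfin : Dalpha R (r' + 1) α
      - (-1 : MvPolynomial (Fin (r' + 1)) R) ^ ((k : ℕ) - (j : ℕ)) * C c
        * ((-1 : MvPolynomial (Fin (r' + 1)) R) ^ ((k : ℕ) - (j : ℕ))
          * Dalpha R (r' + 1) β)
      = Dalpha R (r' + 1) α - C c * Dalpha R (r' + 1) β := by
    rw [show ((-1 : MvPolynomial (Fin (r' + 1)) R)) ^ ((k : ℕ) - (j : ℕ)) * C c
        * ((-1) ^ ((k : ℕ) - (j : ℕ)) * Dalpha R (r' + 1) β)
        = ((-1) ^ ((k : ℕ) - (j : ℕ)) * (-1) ^ ((k : ℕ) - (j : ℕ)))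
          * (C c * Dalpha R (r' + 1) β) from by ring, hone, one_mul]
  rw [hfin]
  exact step1 n (r' + 1) R c α j hjn
end

section
/- Fix integers 1 ≤ r ≤ n. Let R be a commutative ring and c ∈ R. Let α₁ > α₂ > ⋯ > α_r ≥ 0 be integers, and suppose there are indices i ≠ j with α_j ≥ n and α_j − n = α_i. Then D_α lies in the ideal I_P(c) of R[x₁,…,x_r] generated by x₁^n − c, …, x_r^n − c. -/
open Finset MvPolynomial

/-- The determinantal vanishing from the first proof of Theorem 2.5: if
`α₁ > ⋯ > α_r ≥ 0` is strictly decreasing and there are indices `i ≠ j` with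
`αⱼ ≥ n` and `αⱼ - n = αᵢ`, then `D_α ∈ I_P(c) = ⟨x₁ⁿ - c, …, x_rⁿ - c⟩`. -/
theorem determinant_vanishing (n r : ℕ) (hr : 1 ≤ r) (hrn : r ≤ n)
    (R : Type*) [CommRing R] (c : R)
    (α : Fin r → ℕ) (hα : StrictAnti α)
    (i j : Fin r) (hij : i ≠ j) (hjn : n ≤ α j) (heq : α j - n = α i) :
    Dalpha R r α ∈ IP R r n c := by
  set I := IP R r n c
  let q : MvPolynomial (Fin r) R →+* _ := Ideal.Quotient.mk I
  rw [← Ideal.Quotient.eq_zero_iff_mem]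
  have hXn : ∀ k : Fin r, q (X k) ^ n = q (C c) := by
    intro k
    have : X (R := R) k ^ n - C c ∈ I := Ideal.subset_span ⟨k, rfl⟩
    have := (Ideal.Quotient.eq_zero_iff_mem).mpr this
    rw [map_sub, map_pow, sub_eq_zero] at this
    exact this
  have haj : α j = α i + n := by omega
  show q (Dalpha R r α) = 0
  rw [Dalpha, RingHom.map_det]
  set M : Matrix (Fin r) (Fin r) (MvPolynomial (Fin r) R ⧸ I) :=
    fun k l => q (X k) ^ α l with hM
  have hMeq : (q.mapMatrix (Matrix.of fun i j : Fin r => X i ^ α j)) = M := by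
    ext k l
    simp [M, RingHom.mapMatrix_apply]
  rw [hMeq]
  have hcol : M = M.updateCol j (fun k => q (C c) * M k i) := by
    ext k l
    rcases eq_or_ne l j with rfl | hl
    · rw [Matrix.updateCol_self]
      simp [Matrix.updateCol_apply, M, haj, pow_add, hXn k, mul_comm]
    · simp [Matrix.updateCol_apply, hl]
  rw [hcol]
  have := Matrix.det_updateCol_smul M j (q (C c)) (fun k => M k i)
  rw [show (fun k => q (C c) * M k i) = (q (C c) • fun k => M k i) from rfl, this,
    Matrix.det_updateCol_eq_zero hij, mul_zero]
end
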